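/- Assume conditions (A2)–(A4), and let the process Φ have an initial distribution ν (a Borel probability measure on X) satisfying sup_{t≥0} ∫_X V^ζ d(νP_t) < ∞ (this holds in particular for ν = μ and for ν = μ_*). Then for every t ≥ 0 the martingale part M_t(g) = χ_g(Φ_t) − χ_g(Φ_0) + ∫_0^t g(Φ_s) ds satisfies E_ν[|M_t(g)|^ζ] < ∞; in particular E_{μ_*}[M_1(g)²] < ∞. -/

import Mathlib

open MeasureTheory Filter Set
open scoped ENNReal Topology NNReal

noncomputable section

variable {X : Type*} [MetricSpace X] [CompleteSpace X] [SecondCountableTopology X]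
  [MeasurableSpace X] [BorelSpace X]

/-- Action of a transition kernel family on measures: `ν ↦ ν P_t`. -/
def measAct (P : ℝ → X → Measure X) (t : ℝ) (ν : Measure X) : Measure X :=
  ν.bind (P t)

/-- Dual action of the semigroup on functions: `f ↦ P_t f`. -/
def funAct (P : ℝ → X → Measure X) (t : ℝ) (f : X → ℝ) (x : X) : ℝ :=
  ∫ y, f y ∂(P t x)

/-- A Borel (probability) measure has a finite first moment. -/
def FiniteFirstMoment (ν : Measure X) : Prop :=
  ∀ x₀ : X, Integrable (fun x => dist x₀ x) ν

/-- The Wasserstein (Kantorovich–Rubinstein) distance `d_W`. -/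
def wassDist (μ ν : Measure X) : ℝ :=
  sSup {r | ∃ f : X → ℝ, LipschitzWith 1 f ∧ r = |(∫ x, f x ∂μ) - ∫ x, f x ∂ν|}

/-- A Markov semigroup `{P_t}_{t ≥ 0}` of probability kernels on `X`. -/
structure IsMarkovSemigroup (P : ℝ → X → Measure X) : Prop where
  prob : ∀ t, 0 ≤ t → ∀ x, IsProbabilityMeasure (P t x)
  jointMeas : ∀ A : Set X, MeasurableSet A → Measurable fun p : ℝ × X => P p.1 p.2 A
  init : ∀ x, P 0 x = Measure.dirac x
  chapman : ∀ s t, 0 ≤ s → 0 ≤ t → ∀ x, P (s + t) x = (P s x).bind (P t)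

/-- Condition (A1): stochastic continuity of the semigroup. -/
def CondA1 (P : ℝ → X → Measure X) : Prop :=
  ∀ f : X → ℝ, Continuous f → (∃ C, ∀ x, |f x| ≤ C) →
    ∀ x : X, Tendsto (fun t => funAct P t f x) (𝓝[>] (0 : ℝ)) (𝓝 (f x))

/-- Condition (A2): the Feller property. -/
def CondA2 (P : ℝ → X → Measure X) : Prop :=
  ∀ f : X → ℝ, Continuous f → (∃ C, ∀ x, |f x| ≤ C) → ∀ t, 0 ≤ t →
    Continuous (funAct P t f) ∧ ∃ C, ∀ x, |funAct P t f x| ≤ C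

/-- Condition (A3): preservation of finite first moments and exponential
contractivity in the Wasserstein distance, with rate `γ`. -/
def CondA3 (P : ℝ → X → Measure X) (γ : ℝ) : Prop :=
  (∀ ν : Measure X, IsProbabilityMeasure ν → FiniteFirstMoment ν →
    ∀ t, 0 < t → FiniteFirstMoment (measAct P t ν)) ∧
  0 < γ ∧
  ∀ t, 0 ≤ t → ∀ x y : X,
    wassDist (P t x) (P t y) ≤ Real.exp (-γ * t) * dist x y

/-- Condition (A4): a uniform-in-time moment bound of order `ζ > 2` for the initial
distribution `μ`, along the semigroup. -/
def CondA4 (P : ℝ → X → Measure X) (μ : Measure X) (x₀ : X) (ζ : ℝ) : Prop :=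
  2 < ζ ∧ ∃ M : ℝ, ∀ t, 0 ≤ t →
    (∫⁻ x, ENNReal.ofReal (dist x₀ x ^ ζ) ∂(measAct P t μ)) ≤ ENNReal.ofReal M

variable {Ω : Type*} [MeasurableSpace Ω]

/-- The natural filtration of the process `Φ`. -/
def natFiltration (Φ : ℝ → Ω → X) (s : ℝ) : MeasurableSpace Ω :=
  ⨆ u ∈ Set.Icc (0 : ℝ) s, MeasurableSpace.comap (Φ u) inferInstance

/-- A (progressively measurable) time-homogeneous Markov process with state space `X`,
transition semigroup `P` and initial distribution `μ`, realized on `(Ω, ℙ)`. -/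
structure IsMarkovProcess (P : ℝ → X → Measure X) (Φ : ℝ → Ω → X)
    (ℙ : Measure Ω) (μ : Measure X) : Prop where
  jointMeas : Measurable fun p : ℝ × Ω => Φ p.1 p.2
  init : ℙ.map (Φ 0) = μ
  law : ∀ t, 0 ≤ t → ℙ.map (Φ t) = measAct P t μ
  markov : ∀ f : X → ℝ, Measurable f → (∃ C, ∀ x, |f x| ≤ C) →
    ∀ s t : ℝ, 0 ≤ s → 0 ≤ t →
      (fun ω => funAct P t f (Φ s ω)) =ᵐ[ℙ]
        ℙ[(fun ω => f (Φ (s + t) ω)) | natFiltration Φ s]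

/-- A Markov process together with a measurable family of laws `{ℙ_x}_{x ∈ X}`,
with `ℙ_x(Φ_0 = x) = 1`. -/
structure IsMarkovFamily (P : ℝ → X → Measure X) (Φ : ℝ → Ω → X)
    (ℙ : X → Measure Ω) : Prop where
  prob : ∀ x, IsProbabilityMeasure (ℙ x)
  jointMeas : Measurable fun p : ℝ × Ω => Φ p.1 p.2
  measFam : ∀ s : Set Ω, MeasurableSet s → Measurable fun x => ℙ x s
  start : ∀ x, (ℙ x) {ω | Φ 0 ω = x} = 1
  law : ∀ x, ∀ t, 0 ≤ t → (ℙ x).map (Φ t) = P t x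
  markov : ∀ x : X, ∀ f : X → ℝ, Measurable f → (∃ C, ∀ z, |f z| ≤ C) →
    ∀ s t : ℝ, 0 ≤ s → 0 ≤ t →
      (fun ω => funAct P t f (Φ s ω)) =ᵐ[ℙ x]
        (ℙ x)[(fun ω => f (Φ (s + t) ω)) | natFiltration Φ s]

/-- The corrector function `χ_g(x) = ∫_0^∞ (P_t g)(x) dt`. -/
def corrector (P : ℝ → X → Measure X) (g : X → ℝ) (x : X) : ℝ :=
  ∫ t in Set.Ioi (0 : ℝ), funAct P t g x

/-- The additive functional `I_t(g) = ∫_0^t g(Φ_s) ds`. -/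
def addFun (g : X → ℝ) (Φ : ℝ → Ω → X) (t : ℝ) (ω : Ω) : ℝ :=
  ∫ s in (0 : ℝ)..t, g (Φ s ω)

/-- The martingale part `M_t(g) = χ_g(Φ_t) - χ_g(Φ_0) + I_t(g)`. -/
def mart (P : ℝ → X → Measure X) (g : X → ℝ) (Φ : ℝ → Ω → X) (t : ℝ) (ω : Ω) : ℝ :=
  corrector P g (Φ t ω) - corrector P g (Φ 0 ω) + addFun g Φ t ω

/-- The martingale increments `Z_n(g) = M_n(g) - M_{n-1}(g)`. -/
def incr (P : ℝ → X → Measure X) (g : X → ℝ) (Φ : ℝ → Ω → X) (n : ℕ) (ω : Ω) : ℝ :=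
  mart P g Φ (n : ℝ) ω - mart P g Φ ((n : ℝ) - 1) ω

/-- Truncation `a ∧ p` for `p ∈ ℕ ∪ {∞}`, with the convention `a ∧ ∞ = a`. -/
def truncMin (a : ℝ) (p : ℕ∞) : ℝ :=
  if p = ⊤ then a else min a (p.toNat : ℝ)

lemma aux_measP {P : ℝ → X → Measure X} (hP : IsMarkovSemigroup P) (t : ℝ) :
    Measurable (P t) :=
  Measure.measurable_of_measurable_coe _ fun s hs =>
    (hP.jointMeas s hs).comp (measurable_const.prodMk measurable_id)

lemma aux_measP' {P : ℝ → X → Measure X} (hP : IsMarkovSemigroup P) :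
    Measurable (fun p : ℝ × X => P p.1 p.2) :=
  Measure.measurable_of_measurable_coe _ fun s hs => hP.jointMeas s hs

lemma aux_int_bdd {f : X → ℝ} {m : Measure X} [IsFiniteMeasure m]
    (hf : AEStronglyMeasurable f m) {C : ℝ} (h : ∀ x, |f x| ≤ C) : Integrable f m :=
  (integrable_const C).mono' hf (Eventually.of_forall fun x => by
    simpa [Real.norm_eq_abs] using h x)

lemma aux_abs_funAct_le {P : ℝ → X → Measure X} (hP : IsMarkovSemigroup P)
    {g : X → ℝ} (hg : Continuous g) {C : ℝ} (hC : ∀ x, |g x| ≤ C)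
    {t : ℝ} (ht : 0 ≤ t) (x : X) : |funAct P t g x| ≤ C := by
  have := hP.prob t ht x
  have hInt : Integrable g (P t x) := aux_int_bdd hg.aestronglyMeasurable hC
  calc |∫ y, g y ∂(P t x)| = ‖∫ y, g y ∂(P t x)‖ := (Real.norm_eq_abs _).symm
    _ ≤ ∫ y, ‖g y‖ ∂(P t x) := norm_integral_le_integral_norm _
    _ ≤ ∫ _, C ∂(P t x) := integral_mono hInt.norm (integrable_const _)
        (fun y => by simpa [Real.norm_eq_abs] using hC y)
    _ = C := by simp

lemma aux_ffm_dirac (x : X) : FiniteFirstMoment (Measure.dirac x : Measure X) := by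
  intro z
  refine ⟨((continuous_const.dist continuous_id).aestronglyMeasurable), ?_⟩
  have : Measurable fun y : X => ‖dist z y‖ₑ :=
    (continuous_const.dist continuous_id).measurable.enorm
  rw [HasFiniteIntegral, lintegral_dirac' _ this]
  exact enorm_lt_top

lemma aux_ffm_P {P : ℝ → X → Measure X} (hP : IsMarkovSemigroup P)
    (hA3a : ∀ ν : Measure X, IsProbabilityMeasure ν → FiniteFirstMoment ν →
      ∀ t, 0 < t → FiniteFirstMoment (measAct P t ν))
    {t : ℝ} (ht : 0 ≤ t) (x : X) : FiniteFirstMoment (P t x) := by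
  rcases ht.lt_or_eq with h | h
  · have := hA3a (Measure.dirac x) inferInstance (aux_ffm_dirac x) t h
    rwa [measAct, Measure.dirac_bind (aux_measP hP t)] at this
  · rw [← h, hP.init]
    exact aux_ffm_dirac x

lemma aux_lip_int {f : X → ℝ} {K : ℝ≥0} (hf : LipschitzWith K f) {m : Measure X}
    [IsFiniteMeasure m] (hm : FiniteFirstMoment m) (z : X) : Integrable f m := by
  refine ((integrable_const |f z|).add ((hm z).const_mul (K : ℝ))).mono'
    hf.continuous.aestronglyMeasurable (Eventually.of_forall fun y => ?_)
  have h1 : dist (f y) (f z) ≤ (K : ℝ) * dist y z := hf.dist_le_mul y z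
  have h2 : |f y| ≤ |f z| + (K : ℝ) * dist y z := by
    have := abs_sub_abs_le_abs_sub (f y) (f z)
    rw [← Real.dist_eq] at this
    linarith
  calc ‖f y‖ = |f y| := Real.norm_eq_abs _
    _ ≤ |f z| + (K : ℝ) * dist y z := h2
    _ = |f z| + (K : ℝ) * dist z y := by rw [dist_comm]

-- Stage 2: Wasserstein

lemma aux_wass_ge {m₁ m₂ : Measure X} [IsProbabilityMeasure m₁] [IsProbabilityMeasure m₂]
    (h₁ : FiniteFirstMoment m₁) (h₂ : FiniteFirstMoment m₂) (z : X)
    {f : X → ℝ} (hf : LipschitzWith 1 f) :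
    |(∫ x, f x ∂m₁) - ∫ x, f x ∂m₂| ≤ wassDist m₁ m₂ := by
  refine le_csSup ⟨(∫ x, dist z x ∂m₁) + ∫ x, dist z x ∂m₂, ?_⟩ ⟨f, hf, rfl⟩
  rintro r ⟨u, hu, rfl⟩
  have hint : ∀ (m : Measure X) [IsProbabilityMeasure m], FiniteFirstMoment m →
      (∫ x, u x ∂m) - u z = ∫ x, (u x - u z) ∂m := by
    intro m _ hm
    rw [integral_sub (aux_lip_int hu hm z) (integrable_const _), integral_const]
    simp
  have key : ∀ (m : Measure X) [IsProbabilityMeasure m], FiniteFirstMoment m →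
      |(∫ x, (u x - u z) ∂m)| ≤ ∫ x, dist z x ∂m := by
    intro m _ hm
    calc |∫ x, (u x - u z) ∂m| = ‖∫ x, (u x - u z) ∂m‖ := (Real.norm_eq_abs _).symm
      _ ≤ ∫ x, ‖u x - u z‖ ∂m := norm_integral_le_integral_norm _
      _ ≤ ∫ x, dist z x ∂m := by
        refine integral_mono (((aux_lip_int hu hm z).sub (integrable_const _)).norm) (hm z) ?_
        intro x
        have := hu.dist_le_mul x z
        simp only [Real.norm_eq_abs, ← Real.dist_eq]
        rw [dist_comm z x]
        simpa using this
  have e1 := hint m₁ h₁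
  have e2 := hint m₂ h₂
  have : (∫ x, u x ∂m₁) - ∫ x, u x ∂m₂ =
      (∫ x, (u x - u z) ∂m₁) - ∫ x, (u x - u z) ∂m₂ := by
    rw [← e1, ← e2]; ring
  rw [this]
  calc |(∫ x, (u x - u z) ∂m₁) - ∫ x, (u x - u z) ∂m₂|
      ≤ |∫ x, (u x - u z) ∂m₁| + |∫ x, (u x - u z) ∂m₂| := abs_sub _ _
    _ ≤ (∫ x, dist z x ∂m₁) + ∫ x, dist z x ∂m₂ := add_le_add (key m₁ h₁) (key m₂ h₂)

lemma aux_funAct_lip {P : ℝ → X → Measure X} (hP : IsMarkovSemigroup P) {γ : ℝ}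
    (hA3a : ∀ ν : Measure X, IsProbabilityMeasure ν → FiniteFirstMoment ν →
      ∀ t, 0 < t → FiniteFirstMoment (measAct P t ν))
    (hA3c : ∀ t, 0 ≤ t → ∀ x y : X,
      wassDist (P t x) (P t y) ≤ Real.exp (-γ * t) * dist x y)
    {g : X → ℝ} {K : ℝ≥0} (hg : LipschitzWith K g)
    {t : ℝ} (ht : 0 ≤ t) (x y : X) :
    |funAct P t g x - funAct P t g y| ≤ (K : ℝ) * Real.exp (-γ * t) * dist x y := by
  have hx := hP.prob t ht x
  have hy := hP.prob t ht y
  rcases eq_or_ne K 0 with hK | hK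
  · have hconst : ∀ a b : X, g a = g b := by
      intro a b
      have := hg.dist_le_mul a b
      rw [hK] at this
      simpa [dist_le_zero] using this
    have : funAct P t g x = funAct P t g y := by
      unfold funAct
      rw [show (fun y => g y) = fun _ => g x from funext fun a => hconst a x]
      simp
    rw [this, sub_self, abs_zero, hK]
    positivity
  · set f : X → ℝ := fun z => (K : ℝ)⁻¹ * g z with hfdef
    have hKpos : (0 : ℝ) < K := by positivity
    have hf : LipschitzWith 1 f := by
      rw [lipschitzWith_iff_dist_le_mul]
      intro a b
      have := hg.dist_le_mul a b
      simp only [hfdef, Real.dist_eq, ← mul_sub, abs_mul, abs_inv, abs_of_pos hKpos,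
        NNReal.coe_one, one_mul]
      rw [Real.dist_eq] at this
      calc (K : ℝ)⁻¹ * |g a - g b| ≤ (K : ℝ)⁻¹ * ((K : ℝ) * dist a b) := by
            apply mul_le_mul_of_nonneg_left this (by positivity)
        _ = dist a b := by field_simp
    have hW := aux_wass_ge (aux_ffm_P hP hA3a ht x) (aux_ffm_P hP hA3a ht y) x hf
    have hint : ∀ z : X, funAct P t g z = (K : ℝ) * ∫ w, f w ∂(P t z) := by
      intro z
      unfold funAct
      rw [← integral_const_mul]
      congr 1; funext w; simp only [hfdef]; rw [← mul_assoc, mul_inv_cancel₀ hKpos.ne', one_mul]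
    rw [hint x, hint y, ← mul_sub, abs_mul, abs_of_pos hKpos, mul_assoc]
    exact mul_le_mul_of_nonneg_left (hW.trans (hA3c t ht x y)) hKpos.le

-- Stage 3

lemma aux_isProb_measAct {P : ℝ → X → Measure X} (hP : IsMarkovSemigroup P)
    {t : ℝ} (ht : 0 ≤ t) (ν : Measure X) [IsProbabilityMeasure ν] :
    IsProbabilityMeasure (measAct P t ν) := by
  constructor
  rw [measAct, Measure.bind_apply MeasurableSet.univ (aux_measP hP t).aemeasurable]
  have : ∀ x : X, P t x Set.univ = 1 := fun x => (hP.prob t ht x).measure_univ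
  simp [this]

lemma aux_exchange {P : ℝ → X → Measure X} (hP : IsMarkovSemigroup P) (hA2 : CondA2 P)
    {f : X → ℝ} (hf : Continuous f) (hf0 : ∀ x, 0 ≤ f x) {C : ℝ} (hC : ∀ x, |f x| ≤ C)
    {t : ℝ} (ht : 0 ≤ t) (ν : Measure X) [IsProbabilityMeasure ν] :
    ∫ x, funAct P t f x ∂ν = ∫ x, f x ∂(measAct P t ν) := by
  have hfa := hA2 f hf ⟨C, hC⟩ t ht
  have := aux_isProb_measAct hP ht ν
  have hfa0 : ∀ x, 0 ≤ funAct P t f x := by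
    intro x; exact integral_nonneg hf0
  have hint1 : Integrable (fun x => funAct P t f x) ν :=
    aux_int_bdd hfa.1.aestronglyMeasurable (C := C) fun x => aux_abs_funAct_le hP hf hC ht x
  have hint2 : Integrable f (measAct P t ν) := aux_int_bdd hf.aestronglyMeasurable hC
  have key : ENNReal.ofReal (∫ x, funAct P t f x ∂ν)
      = ENNReal.ofReal (∫ x, f x ∂(measAct P t ν)) := by
    rw [ofReal_integral_eq_lintegral_ofReal hint1 (Eventually.of_forall hfa0),
      ofReal_integral_eq_lintegral_ofReal hint2 (Eventually.of_forall hf0)]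
    rw [measAct, Measure.lintegral_bind (aux_measP hP t).aemeasurable
      hf.measurable.ennreal_ofReal.aemeasurable]
    congr 1
    funext x
    have := hP.prob t ht x
    rw [← ofReal_integral_eq_lintegral_ofReal (aux_int_bdd hf.aestronglyMeasurable hC)
      (Eventually.of_forall hf0)]
    rfl
  exact (ENNReal.ofReal_eq_ofReal_iff (integral_nonneg hfa0) (integral_nonneg hf0)).mp key

-- Stage 4

lemma aux_funAct_add_const {P : ℝ → X → Measure X} (hP : IsMarkovSemigroup P)
    {g : X → ℝ} (hgc : Continuous g) {C : ℝ} (hC : ∀ x, |g x| ≤ C)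
    {t : ℝ} (ht : 0 ≤ t) (c : ℝ) (x : X) :
    funAct P t (fun y => g y + c) x = funAct P t g x + c := by
  have := hP.prob t ht x
  unfold funAct
  rw [integral_add (aux_int_bdd hgc.aestronglyMeasurable hC) (integrable_const _)]
  simp

lemma aux_invariant {P : ℝ → X → Measure X} (hP : IsMarkovSemigroup P) (hA2 : CondA2 P)
    {g : X → ℝ} (hgc : Continuous g) {C : ℝ} (hC : ∀ x, |g x| ≤ C) (hC0 : 0 ≤ C)
    {μstar : Measure X} [IsProbabilityMeasure μstar]
    (hinv : ∀ t, 0 ≤ t → measAct P t μstar = μstar)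
    {t : ℝ} (ht : 0 ≤ t) :
    ∫ x, funAct P t g x ∂μstar = ∫ x, g x ∂μstar := by
  set f : X → ℝ := fun y => g y + C with hf
  have hfc : Continuous f := hgc.add continuous_const
  have hf0 : ∀ x, 0 ≤ f x := fun x => by
    have := (abs_le.mp (hC x)).1; simp [hf]; linarith
  have hfC : ∀ x, |f x| ≤ C + C := fun x => by
    have := abs_le.mp (hC x); rw [abs_le]; constructor <;> simp [hf] <;> linarith [this.1, this.2]
  have h1 := aux_exchange hP hA2 hfc hf0 hfC ht μstar
  rw [hinv t ht] at h1
  have h2 : ∀ x, funAct P t f x = funAct P t g x + C :=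
    aux_funAct_add_const hP hgc hC ht C
  have hfa := hA2 g hgc ⟨C, hC⟩ t ht
  have hint1 : Integrable (fun x => funAct P t g x) μstar :=
    aux_int_bdd hfa.1.aestronglyMeasurable (C := C) fun x => aux_abs_funAct_le hP hgc hC ht x
  have hint2 : Integrable g μstar := aux_int_bdd hgc.aestronglyMeasurable hC
  rw [show (fun x => funAct P t f x) = fun x => funAct P t g x + C from funext h2] at h1
  rw [integral_add hint1 (integrable_const _)] at h1
  rw [show ∫ x, f x ∂μstar = (∫ x, g x ∂μstar) + ∫ _, C ∂μstar from
    integral_add hint2 (integrable_const _)] at h1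
  linarith [h1]

lemma aux_moment {ζ M : ℝ} (hζ : 1 ≤ ζ) {m : Measure X} [IsProbabilityMeasure m] (x₀ : X)
    (h : ∫⁻ x, ENNReal.ofReal (dist x₀ x ^ ζ) ∂m ≤ ENNReal.ofReal M) :
    ∫⁻ x, ENNReal.ofReal (dist x₀ x) ∂m ≤ ENNReal.ofReal (1 + max M 0) := by
  have hpt : ∀ x : X, ENNReal.ofReal (dist x₀ x)
      ≤ 1 + ENNReal.ofReal (dist x₀ x ^ ζ) := by
    intro x
    rcases le_total (dist x₀ x) 1 with hd | hd
    · calc ENNReal.ofReal (dist x₀ x) ≤ ENNReal.ofReal 1 := ENNReal.ofReal_le_ofReal hd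
        _ ≤ 1 + _ := by simp
    · have : dist x₀ x ≤ dist x₀ x ^ ζ := by
        calc dist x₀ x = dist x₀ x ^ (1 : ℝ) := (Real.rpow_one _).symm
          _ ≤ dist x₀ x ^ ζ := Real.rpow_le_rpow_of_exponent_le hd hζ
      calc ENNReal.ofReal (dist x₀ x) ≤ ENNReal.ofReal (dist x₀ x ^ ζ) :=
            ENNReal.ofReal_le_ofReal this
        _ ≤ 1 + _ := le_add_self
  calc ∫⁻ x, ENNReal.ofReal (dist x₀ x) ∂m
      ≤ ∫⁻ x, (1 + ENNReal.ofReal (dist x₀ x ^ ζ)) ∂m := lintegral_mono hpt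
    _ = ∫⁻ _, (1:ℝ≥0∞) ∂m + ∫⁻ x, ENNReal.ofReal (dist x₀ x ^ ζ) ∂m :=
        lintegral_add_left measurable_const _
    _ ≤ 1 + ENNReal.ofReal M := by
        rw [lintegral_one, measure_univ]
        exact add_le_add le_rfl h
    _ ≤ ENNReal.ofReal (1 + max M 0) := by
        rw [ENNReal.ofReal_add zero_le_one (le_max_right _ _), ENNReal.ofReal_one]
        exact add_le_add le_rfl (ENNReal.ofReal_le_ofReal (le_max_left _ _))

lemma aux_int_V {m : Measure X} [IsProbabilityMeasure m] (x₀ : X) {B : ℝ} (hB : 0 ≤ B)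
    (h : ∫⁻ x, ENNReal.ofReal (dist x₀ x) ∂m ≤ ENNReal.ofReal B) :
    Integrable (fun x => dist x₀ x) m ∧ ∫ x, dist x₀ x ∂m ≤ B := by
  have hcont : Continuous fun x : X => dist x₀ x := continuous_const.dist continuous_id
  have heq : ∫⁻ x, ‖dist x₀ x‖ₑ ∂m = ∫⁻ x, ENNReal.ofReal (dist x₀ x) ∂m := by
    congr 1; funext x; exact Real.enorm_eq_ofReal dist_nonneg
  have hint : Integrable (fun x => dist x₀ x) m := by
    refine ⟨hcont.aestronglyMeasurable, ?_⟩
    rw [HasFiniteIntegral, heq]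
    exact lt_of_le_of_lt h ENNReal.ofReal_lt_top
  refine ⟨hint, ?_⟩
  rw [integral_eq_lintegral_of_nonneg_ae (Eventually.of_forall fun x => dist_nonneg)
    hcont.aestronglyMeasurable]
  calc (∫⁻ x, ENNReal.ofReal (dist x₀ x) ∂m).toReal ≤ (ENNReal.ofReal B).toReal :=
        ENNReal.toReal_mono ENNReal.ofReal_ne_top h
    _ = B := ENNReal.toReal_ofReal hB

-- Stage 5

lemma aux_min_tendsto {γ : ℝ} (hγ : 0 < γ) (x₀ : X) (m : Measure X)
    [IsProbabilityMeasure m] {a : ℝ} (ha : 0 ≤ a) :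
    Tendsto (fun n : ℕ => ∫ y, min a (Real.exp (-γ) ^ n * dist x₀ y) ∂m) atTop (𝓝 0) := by
  have hlt : Real.exp (-γ) < 1 := Real.exp_lt_one_iff.mpr (by linarith)
  have hexp0 : (0:ℝ) ≤ Real.exp (-γ) := (Real.exp_pos _).le
  have hmain := tendsto_integral_of_dominated_convergence (μ := m)
    (F := fun n : ℕ => fun y => min a (Real.exp (-γ) ^ n * dist x₀ y))
    (f := fun _ => (0:ℝ)) (bound := fun _ => a)
    (fun n => (continuous_const.min (continuous_const.mul
      (continuous_const.dist continuous_id))).aestronglyMeasurable)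
    (integrable_const a)
    (fun n => Eventually.of_forall fun y => by
      have h0 : 0 ≤ min a (Real.exp (-γ) ^ n * dist x₀ y) :=
        le_min ha (by positivity)
      rw [Real.norm_eq_abs, abs_of_nonneg h0]
      exact min_le_left _ _)
    (Eventually.of_forall fun y => by
      have h1 : Tendsto (fun n : ℕ => Real.exp (-γ) ^ n * dist x₀ y) atTop (𝓝 0) := by
        simpa using (tendsto_pow_atTop_nhds_zero_of_lt_one hexp0 hlt).mul_const (dist x₀ y)
      have h2 := (tendsto_const_nhds (x := a) (f := atTop (α := ℕ))).min h1
      simpa [min_eq_right ha] using h2)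
  simpa using hmain

lemma aux_mustar_moment {P : ℝ → X → Measure X} (hP : IsMarkovSemigroup P) (hA2 : CondA2 P)
    {γ : ℝ} (hγ : 0 < γ)
    (hA3a : ∀ ν : Measure X, IsProbabilityMeasure ν → FiniteFirstMoment ν →
      ∀ t, 0 < t → FiniteFirstMoment (measAct P t ν))
    (hA3c : ∀ t, 0 ≤ t → ∀ x y : X,
      wassDist (P t x) (P t y) ≤ Real.exp (-γ * t) * dist x y)
    (x₀ : X) {μ μstar : Measure X} [IsProbabilityMeasure μ] [IsProbabilityMeasure μstar]
    (hinv : ∀ t, 0 ≤ t → measAct P t μstar = μstar)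
    {M₁ : ℝ} (hM₁ : 0 ≤ M₁)
    (hMom : ∀ s : ℝ, 0 ≤ s →
      (∫⁻ x, ENNReal.ofReal (dist x₀ x) ∂(measAct P s μ)) ≤ ENNReal.ofReal M₁) :
    ∫⁻ x, ENNReal.ofReal (dist x₀ x) ∂μstar ≤ ENNReal.ofReal M₁ := by
  have hVc : Continuous fun x : X => dist x₀ x := continuous_const.dist continuous_id
  suffices hfR : ∀ R : ℕ, ∫ x, min (dist x₀ x) (R : ℝ) ∂μstar ≤ M₁ by
    have h1 : ∀ x : X, ENNReal.ofReal (dist x₀ x)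
        = ⨆ R : ℕ, ENNReal.ofReal (min (dist x₀ x) (R : ℝ)) := by
      intro x
      refine le_antisymm ?_ (iSup_le fun R => ENNReal.ofReal_le_ofReal (min_le_left _ _))
      refine le_trans (le_of_eq ?_) (le_iSup _ ⌈dist x₀ x⌉₊)
      rw [min_eq_left (Nat.le_ceil _)]
    calc ∫⁻ x, ENNReal.ofReal (dist x₀ x) ∂μstar
        = ∫⁻ x, ⨆ R : ℕ, ENNReal.ofReal (min (dist x₀ x) (R:ℝ)) ∂μstar :=
          lintegral_congr h1
      _ = ⨆ R : ℕ, ∫⁻ x, ENNReal.ofReal (min (dist x₀ x) (R:ℝ)) ∂μstar := by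
          refine lintegral_iSup (fun R => ((hVc.min continuous_const).measurable).ennreal_ofReal)
            (fun R R' hRR' x => ENNReal.ofReal_le_ofReal
              (min_le_min le_rfl (Nat.cast_le.mpr hRR')))
      _ ≤ ENNReal.ofReal M₁ := by
          refine iSup_le fun R => ?_
          have hint : Integrable (fun x => min (dist x₀ x) (R:ℝ)) μstar := by
            refine aux_int_bdd (hVc.min continuous_const).aestronglyMeasurable (C := (R:ℝ)) ?_
            intro x
            rw [abs_of_nonneg (le_min dist_nonneg (Nat.cast_nonneg R))]
            exact min_le_right _ _
          rw [← ofReal_integral_eq_lintegral_ofReal hint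
            (Eventually.of_forall fun x => le_min dist_nonneg (Nat.cast_nonneg R))]
          exact ENNReal.ofReal_le_ofReal (hfR R)
  intro R
  set Rr : ℝ := (R : ℝ) with hRr
  have hR0 : (0:ℝ) ≤ Rr := Nat.cast_nonneg R
  set fR : X → ℝ := fun y => min (dist x₀ y) Rr with hfRdef
  have hfRc : Continuous fR := hVc.min continuous_const
  have hfR0 : ∀ x, 0 ≤ fR x := fun x => le_min dist_nonneg hR0
  have hfRabs : ∀ x, |fR x| ≤ Rr := fun x => by
    rw [abs_of_nonneg (hfR0 x)]; exact min_le_right _ _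
  have hfRlip : LipschitzWith 1 fR := (LipschitzWith.dist_right x₀).min_const Rr
  have hfRle : ∀ x, fR x ≤ dist x₀ x := fun x => min_le_left _ _
  -- the two error terms
  set ε : ℕ → ℝ := fun n => ∫ y, min (2*Rr) (Real.exp (-γ) ^ n * dist x₀ y) ∂μstar with hε
  set δ : ℕ → ℝ := fun n => ∫ y, min (2*Rr) (Real.exp (-γ) ^ n * dist x₀ y) ∂μ with hδ
  have hεt : Tendsto ε atTop (𝓝 0) := aux_min_tendsto hγ x₀ μstar (by linarith)
  have hδt : Tendsto δ atTop (𝓝 0) := aux_min_tendsto hγ x₀ μ (by linarith)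
  have key : ∀ n : ℕ, ∫ x, fR x ∂μstar ≤ M₁ + (ε n + δ n) := by
    intro n
    set t : ℝ := (n : ℝ) with htdef
    have ht : 0 ≤ t := Nat.cast_nonneg n
    have hcn : Real.exp (-γ * t) = Real.exp (-γ) ^ n := by
      rw [htdef, mul_comm, Real.exp_nat_mul]
    have hfacont := (hA2 fR hfRc ⟨Rr, hfRabs⟩ t ht).1
    have hfabd : ∀ x, |funAct P t fR x| ≤ Rr := fun x => aux_abs_funAct_le hP hfRc hfRabs ht x
    have hmin_cont : Continuous fun y : X => min (2*Rr) (Real.exp (-γ) ^ n * dist x₀ y) :=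
      continuous_const.min (continuous_const.mul hVc)
    have hmin_nonneg : ∀ y : X, 0 ≤ min (2*Rr) (Real.exp (-γ) ^ n * dist x₀ y) :=
      fun y => le_min (by linarith) (by positivity)
    have hmin_bd : ∀ y : X, |min (2*Rr) (Real.exp (-γ) ^ n * dist x₀ y)| ≤ 2*Rr :=
      fun y => by rw [abs_of_nonneg (hmin_nonneg y)]; exact min_le_left _ _
    have hmin_int : ∀ (m : Measure X) [IsProbabilityMeasure m],
        Integrable (fun y => min (2*Rr) (Real.exp (-γ) ^ n * dist x₀ y)) m :=
      fun m _ => aux_int_bdd hmin_cont.aestronglyMeasurable hmin_bd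
    -- pointwise Lipschitz-type bound
    have hpt : ∀ a b : X, funAct P t fR a ≤ funAct P t fR b
        + min (2*Rr) (Real.exp (-γ) ^ n * dist x₀ a) → True := fun _ _ _ => trivial
    have hpt2 : ∀ a b : X, funAct P t fR a - funAct P t fR b
        ≤ min (2*Rr) (Real.exp (-γ) ^ n * dist b a) := by
      intro a b
      refine le_min ?_ ?_
      · have h1 := hfabd a; have h2 := hfabd b
        rw [abs_le] at h1 h2; linarith [h1.1, h1.2, h2.1, h2.2]
      · have := aux_funAct_lip hP hA3a hA3c hfRlip ht a b
        rw [NNReal.coe_one, one_mul, hcn, dist_comm a b] at this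
        exact (le_abs_self _).trans this
    -- step 1 : ∫ fR dμstar = ∫ funAct dμstar
    have e0 : ∫ x, fR x ∂μstar = ∫ x, funAct P t fR x ∂μstar := by
      rw [aux_exchange hP hA2 hfRc hfR0 hfRabs ht μstar, hinv t ht]
    -- step 2 : ∫ funAct dμstar ≤ funAct x₀ + ε n
    have e1 : ∫ x, funAct P t fR x ∂μstar ≤ funAct P t fR x₀ + ε n := by
      have h2' : Integrable (fun y : X => funAct P t fR x₀
          + min (2*Rr) (Real.exp (-γ) ^ n * dist x₀ y)) μstar :=
        (integrable_const (funAct P t fR x₀)).add (hmin_int μstar)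
      calc ∫ x, funAct P t fR x ∂μstar
          ≤ ∫ y, (funAct P t fR x₀ + min (2*Rr) (Real.exp (-γ) ^ n * dist x₀ y)) ∂μstar :=
            integral_mono (aux_int_bdd hfacont.aestronglyMeasurable hfabd) h2'
              (fun y => by have := hpt2 y x₀; linarith)
        _ = funAct P t fR x₀ + ε n := by
            rw [integral_add (integrable_const _) (hmin_int μstar), integral_const,
              probReal_univ]
            simp [hε]
    -- step 3 : funAct x₀ ≤ ∫ funAct dμ + δ n
    have e2 : funAct P t fR x₀ ≤ (∫ x, funAct P t fR x ∂μ) + δ n := by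
      have h0 : funAct P t fR x₀ = ∫ _, funAct P t fR x₀ ∂μ := by
        rw [integral_const, probReal_univ]
        simp
      rw [h0]
      calc ∫ _, funAct P t fR x₀ ∂μ
          ≤ ∫ x, (funAct P t fR x + min (2*Rr) (Real.exp (-γ) ^ n * dist x₀ x)) ∂μ :=
            integral_mono (integrable_const _)
              ((aux_int_bdd hfacont.aestronglyMeasurable hfabd).add (hmin_int μ))
              (fun x => by have := hpt2 x₀ x; rw [dist_comm x x₀] at this; linarith)
        _ = (∫ x, funAct P t fR x ∂μ) + δ n :=
            integral_add (aux_int_bdd hfacont.aestronglyMeasurable hfabd) (hmin_int μ)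
    -- step 4 : ∫ funAct dμ ≤ M₁
    have e3 : ∫ x, funAct P t fR x ∂μ ≤ M₁ := by
      rw [aux_exchange hP hA2 hfRc hfR0 hfRabs ht μ]
      have := aux_isProb_measAct hP ht μ
      obtain ⟨hVint, hVle⟩ := aux_int_V x₀ hM₁ (hMom t ht)
      calc ∫ x, fR x ∂(measAct P t μ) ≤ ∫ x, dist x₀ x ∂(measAct P t μ) :=
            integral_mono (aux_int_bdd hfRc.aestronglyMeasurable hfRabs) hVint hfRle
        _ ≤ M₁ := hVle
    calc ∫ x, fR x ∂μstar ≤ funAct P t fR x₀ + ε n := by rw [e0]; exact e1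
      _ ≤ (∫ x, funAct P t fR x ∂μ) + δ n + ε n := by linarith
      _ ≤ M₁ + (ε n + δ n) := by linarith
  have hlim : Tendsto (fun n => M₁ + (ε n + δ n)) atTop (𝓝 M₁) := by
    have := tendsto_const_nhds (x := M₁) (f := atTop (α := ℕ))
    simpa using this.add (hεt.add hδt)
  exact ge_of_tendsto hlim (Eventually.of_forall key)

lemma aux_decay {P : ℝ → X → Measure X} (hP : IsMarkovSemigroup P) (hA2 : CondA2 P)
    {γ : ℝ}
    (hA3a : ∀ ν : Measure X, IsProbabilityMeasure ν → FiniteFirstMoment ν →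
      ∀ t, 0 < t → FiniteFirstMoment (measAct P t ν))
    (hA3c : ∀ t, 0 ≤ t → ∀ x y : X,
      wassDist (P t x) (P t y) ≤ Real.exp (-γ * t) * dist x y)
    {g : X → ℝ} {K : ℝ≥0} (hLip : LipschitzWith K g) {C : ℝ} (hC : ∀ x, |g x| ≤ C)
    (hC0 : 0 ≤ C)
    {μstar : Measure X} [IsProbabilityMeasure μstar]
    (hinv : ∀ t, 0 ≤ t → measAct P t μstar = μstar)
    (hmean : ∫ x, g x ∂μstar = 0) (x₀ : X)
    (hVint : Integrable (fun y => dist x₀ y) μstar)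
    {t : ℝ} (ht : 0 ≤ t) (x : X) :
    |funAct P t g x| ≤ (K : ℝ) * Real.exp (-γ * t) * (dist x₀ x + ∫ y, dist x₀ y ∂μstar) := by
  have hgc : Continuous g := hLip.continuous
  have hzero : ∫ y, funAct P t g y ∂μstar = 0 := by
    rw [aux_invariant hP hA2 hgc hC hC0 hinv ht, hmean]
  have hfacont := (hA2 g hgc ⟨C, hC⟩ t ht).1
  have hfaint : Integrable (fun y => funAct P t g y) μstar :=
    aux_int_bdd hfacont.aestronglyMeasurable (C := C) fun y => aux_abs_funAct_le hP hgc hC ht y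
  have hrepr : funAct P t g x = ∫ y, (funAct P t g x - funAct P t g y) ∂μstar := by
    rw [integral_sub (integrable_const _) hfaint, hzero, integral_const, probReal_univ]
    simp
  rw [hrepr]
  have hbd_int : Integrable (fun y => (K:ℝ) * Real.exp (-γ*t) * (dist x₀ x + dist x₀ y)) μstar := by
    exact ((integrable_const (dist x₀ x)).add hVint).const_mul _
  calc |∫ y, (funAct P t g x - funAct P t g y) ∂μstar|
      = ‖∫ y, (funAct P t g x - funAct P t g y) ∂μstar‖ := (Real.norm_eq_abs _).symm
    _ ≤ ∫ y, ‖funAct P t g x - funAct P t g y‖ ∂μstar := norm_integral_le_integral_norm _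
    _ ≤ ∫ y, (K:ℝ) * Real.exp (-γ*t) * (dist x₀ x + dist x₀ y) ∂μstar := by
        refine integral_mono ((integrable_const _).sub hfaint).norm hbd_int (fun y => ?_)
        have h1 := aux_funAct_lip hP hA3a hA3c hLip ht x y
        have h2 : dist x y ≤ dist x₀ x + dist x₀ y := by
          rw [dist_comm x₀ x]; exact dist_triangle x x₀ y
        calc ‖funAct P t g x - funAct P t g y‖ = |funAct P t g x - funAct P t g y| :=
              Real.norm_eq_abs _
          _ ≤ (K:ℝ) * Real.exp (-γ*t) * dist x y := h1
          _ ≤ (K:ℝ) * Real.exp (-γ*t) * (dist x₀ x + dist x₀ y) := by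
              apply mul_le_mul_of_nonneg_left h2 (by positivity)
    _ = (K:ℝ) * Real.exp (-γ*t) * (dist x₀ x + ∫ y, dist x₀ y ∂μstar) := by
        rw [integral_const_mul, integral_add (integrable_const _) hVint, integral_const,
          probReal_univ]
        simp

lemma aux_corrector_bound {P : ℝ → X → Measure X} {g : X → ℝ} {γ : ℝ} (hγ : 0 < γ)
    {K : ℝ≥0} {c : ℝ} (hc : 0 ≤ c) (x : X)
    (hdec : ∀ t : ℝ, 0 ≤ t → |funAct P t g x| ≤ (K : ℝ) * Real.exp (-γ * t) * c) :
    |corrector P g x| ≤ (K : ℝ) * c * ∫ t in Set.Ioi (0:ℝ), Real.exp (-γ * t) := by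
  have hEnn : 0 ≤ ∫ t in Set.Ioi (0:ℝ), Real.exp (-γ * t) :=
    integral_nonneg fun t => (Real.exp_pos _).le
  by_cases hI : Integrable (fun t => funAct P t g x) (volume.restrict (Set.Ioi (0:ℝ)))
  · have hbint : Integrable (fun t => ((K:ℝ) * c) * Real.exp (-γ * t))
        (volume.restrict (Set.Ioi (0:ℝ))) := (exp_neg_integrableOn_Ioi 0 hγ).const_mul _
    have hae : ∀ᵐ t ∂(volume.restrict (Set.Ioi (0:ℝ))),
        ‖funAct P t g x‖ ≤ ((K:ℝ) * c) * Real.exp (-γ * t) := by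
      rw [ae_restrict_iff' measurableSet_Ioi]
      refine Eventually.of_forall fun t htpos => ?_
      have := hdec t (le_of_lt htpos)
      rw [Real.norm_eq_abs]
      calc |funAct P t g x| ≤ (K:ℝ) * Real.exp (-γ*t) * c := this
        _ = ((K:ℝ) * c) * Real.exp (-γ*t) := by ring
    calc |corrector P g x| = ‖∫ t in Set.Ioi (0:ℝ), funAct P t g x‖ := (Real.norm_eq_abs _).symm
      _ ≤ ∫ t in Set.Ioi (0:ℝ), ((K:ℝ)*c) * Real.exp (-γ * t) :=
          norm_integral_le_of_norm_le hbint hae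
      _ = (K:ℝ) * c * ∫ t in Set.Ioi (0:ℝ), Real.exp (-γ * t) := integral_const_mul _ _
  · have : corrector P g x = 0 := integral_undef hI
    rw [this, abs_zero]
    positivity

lemma aux_corrector_meas {P : ℝ → X → Measure X} (hP : IsMarkovSemigroup P)
    {g : X → ℝ} (hgc : Continuous g) {C : ℝ} (hC : ∀ x, |g x| ≤ C) :
    Measurable (corrector P g) := by
  set F : X × ℝ → ℝ :=
    fun q => (∫⁻ y, ENNReal.ofReal (g y + C) ∂(P q.2 q.1)).toReal - C with hF
  have hFmeas : Measurable F := by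
    apply Measurable.sub _ measurable_const
    apply Measurable.ennreal_toReal
    exact (Measure.measurable_lintegral
      ((hgc.measurable.add measurable_const).ennreal_ofReal)).comp
      ((aux_measP' hP).comp measurable_swap)
  have hSM : StronglyMeasurable fun x : X => ∫ t, F (x, t) ∂(volume.restrict (Set.Ioi (0:ℝ))) :=
    hFmeas.stronglyMeasurable.integral_prod_right'
  have heq : corrector P g = fun x => ∫ t, F (x, t) ∂(volume.restrict (Set.Ioi (0:ℝ))) := by
    funext x
    unfold corrector
    refine setIntegral_congr_fun measurableSet_Ioi fun t ht => ?_
    have hprob := hP.prob t (le_of_lt ht) x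
    have hgint : Integrable g (P t x) := aux_int_bdd hgc.aestronglyMeasurable hC
    have h1 : ∫ y, (g y + C) ∂(P t x) = funAct P t g x + C := by
      rw [integral_add hgint (integrable_const _), integral_const, probReal_univ]
      simp [funAct]
    have h2 : ∫ y, (g y + C) ∂(P t x)
        = (∫⁻ y, ENNReal.ofReal (g y + C) ∂(P t x)).toReal := by
      rw [integral_eq_lintegral_of_nonneg_ae (f := fun y => g y + C) (Eventually.of_forall fun y => by
        show (0:ℝ) ≤ g y + C
        have := (abs_le.mp (hC y)).1; linarith) (hgc.add continuous_const).aestronglyMeasurable]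
    simp only [hF]
    rw [← h2, h1]
    ring
  rw [heq]
  exact hSM.measurable

lemma aux_Phi_meas {Φ : ℝ → Ω → X} (jmeas : Measurable fun p : ℝ × Ω => Φ p.1 p.2) (t : ℝ) :
    Measurable (Φ t) :=
  jmeas.comp (measurable_const.prodMk measurable_id)

lemma aux_addFun_meas {Φ : ℝ → Ω → X} (jmeas : Measurable fun p : ℝ × Ω => Φ p.1 p.2)
    {g : X → ℝ} (hgc : Continuous g) {t : ℝ} (ht : 0 ≤ t) :
    Measurable (addFun g Φ t) := by
  have hFmeas : Measurable fun q : Ω × ℝ => g (Φ q.2 q.1) :=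
    hgc.measurable.comp (jmeas.comp measurable_swap)
  have hSM : StronglyMeasurable fun ω : Ω =>
      ∫ s, g (Φ s ω) ∂(volume.restrict (Set.Ioc (0:ℝ) t)) :=
    hFmeas.stronglyMeasurable.integral_prod_right'
  have heq : addFun g Φ t = fun ω => ∫ s, g (Φ s ω) ∂(volume.restrict (Set.Ioc (0:ℝ) t)) := by
    funext ω
    unfold addFun
    rw [intervalIntegral.integral_of_le ht]
  rw [heq]
  exact hSM.measurable

lemma aux_addFun_bdd {Φ : ℝ → Ω → X} {g : X → ℝ} {C : ℝ} (hC : ∀ x, |g x| ≤ C)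
    {t : ℝ} (ht : 0 ≤ t) (ω : Ω) : |addFun g Φ t ω| ≤ C * t := by
  have := intervalIntegral.norm_integral_le_of_norm_le_const
    (f := fun s => g (Φ s ω)) (a := 0) (b := t) (C := C)
    (fun s _ => by rw [Real.norm_eq_abs]; exact hC _)
  rw [Real.norm_eq_abs] at this
  calc |addFun g Φ t ω| ≤ C * |t - 0| := this
    _ = C * t := by rw [sub_zero, abs_of_nonneg ht]

-- Stage 8

lemma aux_rpow_three {u v w ζ : ℝ} (hu : 0 ≤ u) (hv : 0 ≤ v) (hw : 0 ≤ w) (hζ : 0 ≤ ζ) :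
    (u + v + w) ^ ζ ≤ 3 ^ ζ * (u ^ ζ + v ^ ζ + w ^ ζ) := by
  set m := max u (max v w) with hm
  have hm0 : 0 ≤ m := le_trans hu (le_max_left _ _)
  have h1 : u + v + w ≤ 3 * m := by
    have l1 : u ≤ m := le_max_left _ _
    have l2 : v ≤ m := le_trans (le_max_left _ _) (le_max_right _ _)
    have l3 : w ≤ m := le_trans (le_max_right _ _) (le_max_right _ _)
    linarith
  have h2 : (u + v + w) ^ ζ ≤ (3 * m) ^ ζ :=
    Real.rpow_le_rpow (by positivity) h1 hζ
  rw [Real.mul_rpow (by norm_num) hm0] at h2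
  have h3 : m ^ ζ ≤ u ^ ζ + v ^ ζ + w ^ ζ := by
    have hmem : m = u ∨ m = v ∨ m = w := by
      rcases max_choice u (max v w) with h | h
      · exact Or.inl h
      · rcases max_choice v w with h' | h'
        · exact Or.inr (Or.inl (h.trans h'))
        · exact Or.inr (Or.inr (h.trans h'))
    have pu : 0 ≤ u ^ ζ := Real.rpow_nonneg hu ζ
    have pv : 0 ≤ v ^ ζ := Real.rpow_nonneg hv ζ
    have pw : 0 ≤ w ^ ζ := Real.rpow_nonneg hw ζ
    rcases hmem with h | h | h <;> rw [h] <;> linarith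
  calc (u + v + w) ^ ζ ≤ 3 ^ ζ * m ^ ζ := h2
    _ ≤ 3 ^ ζ * (u ^ ζ + v ^ ζ + w ^ ζ) :=
        mul_le_mul_of_nonneg_left h3 (Real.rpow_nonneg (by norm_num) ζ)

lemma aux_sq_le {ζ : ℝ} (hζ : 2 ≤ ζ) (a : ℝ) : a ^ 2 ≤ 1 + |a| ^ ζ := by
  have h0 : 0 ≤ |a| ^ ζ := Real.rpow_nonneg (abs_nonneg a) ζ
  rcases le_total |a| 1 with h | h
  · have : a ^ 2 = |a| ^ 2 := (sq_abs a).symm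
    nlinarith [abs_nonneg a]
  · have h2 : |a| ^ (2:ℝ) ≤ |a| ^ ζ := Real.rpow_le_rpow_of_exponent_le h hζ
    have h3 : |a| ^ (2:ℝ) = |a| ^ (2:ℕ) := Real.rpow_natCast _ 2
    have h4 : a ^ 2 = |a| ^ (2:ℕ) := (sq_abs a).symm
    rw [h4, ← h3]
    linarith

/-- Lemma 3. Under (A2)–(A4), for an initial distribution `ν` with
uniformly bounded `ζ`-th moments along the semigroup (e.g. `ν = μ` or `ν = μ_*`),
`E_ν[|M_t(g)|^ζ] < ∞` for every `t ≥ 0`; in particular `M_t(g)` is square integrable. -/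
theorem martingale_part_moments
    (P : ℝ → X → Measure X) (hP : IsMarkovSemigroup P)
    (γ ζ : ℝ) (x₀ : X) (μ μstar : Measure X)
    [IsProbabilityMeasure μ] [IsProbabilityMeasure μstar]
    (hA2 : CondA2 P) (hA3 : CondA3 P γ) (hA4 : CondA4 P μ x₀ ζ)
    (hinv : ∀ t, 0 ≤ t → measAct P t μstar = μstar)
    (g : X → ℝ) (K : ℝ≥0) (hLip : LipschitzWith K g) (hBd : ∃ C, ∀ x, |g x| ≤ C)
    (hmean : ∫ x, g x ∂μstar = 0)
    (ν : Measure X) [IsProbabilityMeasure ν]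
    (hν : ∃ M : ℝ, ∀ t, 0 ≤ t →
      (∫⁻ x, ENNReal.ofReal (dist x₀ x ^ ζ) ∂(measAct P t ν)) ≤ ENNReal.ofReal M)
    (ℙν : Measure Ω) [IsProbabilityMeasure ℙν]
    (Φ : ℝ → Ω → X) (hΦ : IsMarkovProcess P Φ ℙν ν) :
    ∀ t : ℝ, 0 ≤ t →
      Integrable (fun ω => |mart P g Φ t ω| ^ ζ) ℙν ∧
      Integrable (fun ω => (mart P g Φ t ω) ^ 2) ℙν := by
  intro t ht
  obtain ⟨hζ2, M, hA4b⟩ := hA4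
  obtain ⟨Mν, hνb⟩ := hν
  obtain ⟨hA3a, hγ, hA3c⟩ := hA3
  obtain ⟨C0, hC0⟩ := hBd
  set C : ℝ := max C0 0 with hCdef
  have hC : ∀ x, |g x| ≤ C := fun x => (hC0 x).trans (le_max_left _ _)
  have hCnn : (0:ℝ) ≤ C := le_max_right _ _
  have hgc : Continuous g := hLip.continuous
  have hζ1 : (1:ℝ) ≤ ζ := by linarith
  have hζ0 : (0:ℝ) ≤ ζ := by linarith
  -- moment bounds along μ
  set M₁ : ℝ := 1 + max M 0 with hM₁def
  have hM₁0 : (0:ℝ) ≤ M₁ := by positivity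
  have hMomμ : ∀ s : ℝ, 0 ≤ s →
      (∫⁻ x, ENNReal.ofReal (dist x₀ x) ∂(measAct P s μ)) ≤ ENNReal.ofReal M₁ := by
    intro s hs
    have := aux_isProb_measAct hP hs μ
    exact aux_moment hζ1 x₀ (hA4b s hs)
  -- first moment of μstar
  have hmustar := aux_mustar_moment hP hA2 hγ hA3a hA3c x₀ hinv hM₁0 hMomμ
  obtain ⟨hVint, _⟩ := aux_int_V x₀ hM₁0 hmustar
  set mstar : ℝ := ∫ y, dist x₀ y ∂μstar with hmstardef
  have hmstar0 : 0 ≤ mstar := integral_nonneg fun y => dist_nonneg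
  -- decay of funAct and corrector bound
  have hdec : ∀ x : X, ∀ s : ℝ, 0 ≤ s →
      |funAct P s g x| ≤ (K:ℝ) * Real.exp (-γ * s) * (dist x₀ x + mstar) :=
    fun x s hs => aux_decay hP hA2 hA3a hA3c hLip hC hCnn hinv hmean x₀ hVint hs x
  set Eγ : ℝ := ∫ s in Set.Ioi (0:ℝ), Real.exp (-γ * s) with hEγdef
  have hEγ0 : 0 ≤ Eγ := integral_nonneg fun s => (Real.exp_pos _).le
  have hcor : ∀ x : X, |corrector P g x| ≤ (K:ℝ) * (dist x₀ x + mstar) * Eγ := by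
    intro x
    exact aux_corrector_bound hγ (by positivity) x (fun s hs => hdec x s hs)
  -- pointwise bound on mart
  set A : ℝ := (K:ℝ) * Eγ with hAdef
  have hA0 : 0 ≤ A := by positivity
  set D : ℝ := 2 * A * mstar + C * t with hDdef
  have hD0 : 0 ≤ D := by positivity
  have hmb : ∀ ω : Ω, |mart P g Φ t ω|
      ≤ A * dist x₀ (Φ t ω) + A * dist x₀ (Φ 0 ω) + D := by
    intro ω
    have h1 := hcor (Φ t ω)
    have h2 := hcor (Φ 0 ω)
    have h3 := aux_addFun_bdd (Φ := Φ) hC ht ω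
    unfold mart
    calc |corrector P g (Φ t ω) - corrector P g (Φ 0 ω) + addFun g Φ t ω|
        ≤ |corrector P g (Φ t ω)| + |corrector P g (Φ 0 ω)| + |addFun g Φ t ω| := by
          calc _ ≤ |corrector P g (Φ t ω) - corrector P g (Φ 0 ω)| + |addFun g Φ t ω| :=
                abs_add_le _ _
            _ ≤ _ := by have := abs_sub (corrector P g (Φ t ω)) (corrector P g (Φ 0 ω)); linarith
      _ ≤ A * dist x₀ (Φ t ω) + A * dist x₀ (Φ 0 ω) + D := by
          have e1 : (K:ℝ) * (dist x₀ (Φ t ω) + mstar) * Eγ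
              = A * dist x₀ (Φ t ω) + A * mstar := by ring
          have e2 : (K:ℝ) * (dist x₀ (Φ 0 ω) + mstar) * Eγ
              = A * dist x₀ (Φ 0 ω) + A * mstar := by ring
          rw [e1] at h1; rw [e2] at h2
          simp only [hDdef]
          linarith
  -- measurability of mart
  have hVmeas : Measurable fun x : X => dist x₀ x :=
    (continuous_const.dist continuous_id).measurable
  have hmart_meas : Measurable (mart P g Φ t) := by
    have hcm := aux_corrector_meas hP hgc hC
    exact ((hcm.comp (aux_Phi_meas hΦ.jointMeas t)).sub
      (hcm.comp (aux_Phi_meas hΦ.jointMeas 0))).add (aux_addFun_meas hΦ.jointMeas hgc ht)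
  -- integrability of V(Φ s)^ζ
  have hVφ : ∀ s : ℝ, 0 ≤ s → Integrable (fun ω => dist x₀ (Φ s ω) ^ ζ) ℙν := by
    intro s hs
    have hms : Measurable fun ω => dist x₀ (Φ s ω) ^ ζ :=
      (hVmeas.comp (aux_Phi_meas hΦ.jointMeas s)).pow_const ζ
    refine ⟨hms.aestronglyMeasurable, ?_⟩
    rw [HasFiniteIntegral]
    have heq : ∫⁻ ω, ‖dist x₀ (Φ s ω) ^ ζ‖ₑ ∂ℙν
        = ∫⁻ ω, ENNReal.ofReal (dist x₀ (Φ s ω) ^ ζ) ∂ℙν := by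
      congr 1; funext ω
      exact Real.enorm_eq_ofReal (Real.rpow_nonneg dist_nonneg ζ)
    rw [heq]
    have hmap : ∫⁻ ω, ENNReal.ofReal (dist x₀ (Φ s ω) ^ ζ) ∂ℙν
        = ∫⁻ x, ENNReal.ofReal (dist x₀ x ^ ζ) ∂(ℙν.map (Φ s)) := by
      rw [lintegral_map (hVmeas.pow_const ζ).ennreal_ofReal (aux_Phi_meas hΦ.jointMeas s)]
    rw [hmap, hΦ.law s hs]
    exact lt_of_le_of_lt (hνb s hs) ENNReal.ofReal_lt_top
  -- part 1
  have hpart1 : Integrable (fun ω => |mart P g Φ t ω| ^ ζ) ℙν := by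
    have hmeas1 : Measurable fun ω => |mart P g Φ t ω| ^ ζ :=
      hmart_meas.abs.pow_const ζ
    have hbound_int : Integrable (fun ω => 3 ^ ζ *
        ((A ^ ζ * dist x₀ (Φ t ω) ^ ζ + A ^ ζ * dist x₀ (Φ 0 ω) ^ ζ) + D ^ ζ)) ℙν := by
      exact ((((hVφ t ht).const_mul (A ^ ζ)).add
        ((hVφ 0 le_rfl).const_mul (A ^ ζ))).add (integrable_const (D ^ ζ))).const_mul (3 ^ ζ)
    refine hbound_int.mono' hmeas1.aestronglyMeasurable (Eventually.of_forall fun ω => ?_)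
    have h0 : 0 ≤ |mart P g Φ t ω| ^ ζ := Real.rpow_nonneg (abs_nonneg _) ζ
    rw [Real.norm_eq_abs, abs_of_nonneg h0]
    have hb := hmb ω
    calc |mart P g Φ t ω| ^ ζ
        ≤ (A * dist x₀ (Φ t ω) + A * dist x₀ (Φ 0 ω) + D) ^ ζ :=
          Real.rpow_le_rpow (abs_nonneg _) hb hζ0
      _ ≤ 3 ^ ζ * ((A * dist x₀ (Φ t ω)) ^ ζ + (A * dist x₀ (Φ 0 ω)) ^ ζ + D ^ ζ) :=
          aux_rpow_three (by positivity) (by positivity) hD0 hζ0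
      _ = 3 ^ ζ * ((A ^ ζ * dist x₀ (Φ t ω) ^ ζ + A ^ ζ * dist x₀ (Φ 0 ω) ^ ζ) + D ^ ζ) := by
          rw [Real.mul_rpow hA0 dist_nonneg, Real.mul_rpow hA0 dist_nonneg]
  refine ⟨hpart1, ?_⟩
  -- part 2
  have hmeas2 : Measurable fun ω => (mart P g Φ t ω) ^ 2 := hmart_meas.pow_const 2
  refine ((integrable_const (1:ℝ)).add hpart1).mono' hmeas2.aestronglyMeasurable
    (Eventually.of_forall fun ω => ?_)
  rw [Real.norm_eq_abs, abs_of_nonneg (sq_nonneg _)]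
  exact aux_sq_le (le_of_lt hζ2) (mart P g Φ t ω)
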